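/- Fix an integer n > 60. Let inv be the set of pairs of functions (f', g') with f', g' : [n] → [n] such that either f'(i) = g'(i) for every i, or g'(f'(i)) = i for every i. For a pair (f,g) of functions [n] → [n], define its distance from inv as min_{(f',g')∈inv} (d(f,f') + d(g,g'))/2, where d is the normalized Hamming distance between functions (fraction of points where they differ). If f and g are drawn independently and uniformly at random from the set of permutations of [n], then the probability that the distance of (f,g) from inv is less than 1/5 is less than 1/12. -/

import Mathlib

open scoped BigOperators

/-- Normalized Hamming distance between functions `[n] → [n]`. -/
noncomputable def nhdist {n : ℕ} {α : Type*} [DecidableEq α] (x y : Fin n → α) : ℝ :=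
  (hammingDist x y : ℝ) / n

/-- The property `inv`: pairs of functions that are equal or co-inverse. -/
def InvPairs (n : ℕ) : Set ((Fin n → Fin n) × (Fin n → Fin n)) :=
  {p | (∀ i, p.1 i = p.2 i) ∨ (∀ i, p.2 (p.1 i) = i)}

/-- Distance of a pair `(f, g)` from the property `inv`:
`min over (f',g') ∈ inv of (d(f,f') + d(g,g'))/2`. -/
noncomputable def distToInv (n : ℕ) (f g : Fin n → Fin n) : ℝ :=
  sInf {r : ℝ | ∃ p ∈ InvPairs n, r = (nhdist f p.1 + nhdist g p.2) / 2}

open scoped Nat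

/-- Number of fixed points of a permutation. -/
def fixc {n : ℕ} (σ : Equiv.Perm (Fin n)) : ℕ :=
  (Finset.univ.filter fun i => σ i = i).card

lemma stab_card_le {n : ℕ} (i : Fin n) :
    (Finset.univ.filter fun σ : Equiv.Perm (Fin n) => σ i = i).card ≤ (n - 1)! := by
  classical
  rw [← Fintype.card_subtype]
  have key : Fintype.card {σ : Equiv.Perm (Fin n) // σ i = i}
      ≤ Fintype.card (Equiv.Perm {j : Fin n // j ≠ i}) := by
    have hprop : ∀ (σ : {σ : Equiv.Perm (Fin n) // σ i = i}) (x : Fin n),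
        x ≠ i ↔ σ.1 x ≠ i := by
      intro σ x
      constructor
      · intro hx h
        exact hx (σ.1.injective (h.trans σ.2.symm))
      · intro hx h
        exact hx (by rw [h, σ.2])
    refine Fintype.card_le_of_injective
      (fun σ => σ.1.subtypePerm (fun x => (hprop σ x).symm)) ?_
    intro σ τ h
    apply Subtype.ext
    apply Equiv.ext
    intro x
    by_cases hx : x = i
    · rw [hx, σ.2, τ.2]
    · have h2 := congrArg (fun (e : Equiv.Perm {j : Fin n // j ≠ i}) => (e ⟨x, hx⟩).1) h
      simpa [Equiv.Perm.subtypePerm_apply] using h2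
  refine key.trans ?_
  rw [Fintype.card_perm]
  have : Fintype.card {j : Fin n // j ≠ i} = n - 1 := by
    simp [Fintype.card_subtype_compl, Fintype.card_fin]
  rw [this]

lemma sum_fixc_le {n : ℕ} (hn : 0 < n) :
    ∑ σ : Equiv.Perm (Fin n), fixc σ ≤ n ! := by
  classical
  have h1 : ∑ σ : Equiv.Perm (Fin n), fixc σ
      = ∑ i : Fin n, (Finset.univ.filter fun σ : Equiv.Perm (Fin n) => σ i = i).card := by
    simp only [fixc, Finset.card_filter]
    rw [Finset.sum_comm]
  rw [h1]
  calc ∑ i : Fin n, (Finset.univ.filter fun σ : Equiv.Perm (Fin n) => σ i = i).card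
      ≤ ∑ _i : Fin n, (n - 1)! := Finset.sum_le_sum fun i _ => stab_card_le i
    _ = n * (n - 1)! := by simp [mul_comm]
    _ = n ! := Nat.mul_factorial_pred hn.ne'

lemma markov_fixc {n : ℕ} (hn : 0 < n) :
    37 * (Finset.univ.filter fun σ : Equiv.Perm (Fin n) => 37 ≤ fixc σ).card ≤ n ! := by
  classical
  have h1 : (Finset.univ.filter fun σ : Equiv.Perm (Fin n) => 37 ≤ fixc σ).card • 37
      ≤ ∑ σ ∈ (Finset.univ.filter fun σ : Equiv.Perm (Fin n) => 37 ≤ fixc σ), fixc σ :=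
    Finset.card_nsmul_le_sum _ _ _ (fun σ hσ => (Finset.mem_filter.mp hσ).2)
  have h2 : ∑ σ ∈ (Finset.univ.filter fun σ : Equiv.Perm (Fin n) => 37 ≤ fixc σ), fixc σ
      ≤ ∑ σ : Equiv.Perm (Fin n), fixc σ :=
    Finset.sum_le_sum_of_subset (Finset.filter_subset _ _)
  simp only [smul_eq_mul] at h1
  have := (h1.trans h2).trans (sum_fixc_le hn)
  omega
lemma fixc_eq_sub {n : ℕ} (σ : Equiv.Perm (Fin n)) :
    fixc σ = n - (Finset.univ.filter fun i => σ i ≠ i).card := by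
  classical
  have := Finset.card_filter_add_card_filter_not
    (s := (Finset.univ : Finset (Fin n))) (p := fun i => σ i = i)
  simp only [Finset.card_univ, Fintype.card_fin, ne_eq] at this
  unfold fixc
  simp only [ne_eq]
  omega

open scoped Classical in
/-- For `n > 60`, if `f` and `g` are independent uniformly random permutations of `[n]`,
then `Pr[d((f,g), inv) < 1/5] < 1/12`. -/
theorem random_perm_pair_far_from_inv (n : ℕ) (hn : 60 < n) :
    ((Finset.univ.filter (fun fg : Equiv.Perm (Fin n) × Equiv.Perm (Fin n) =>
        distToInv n (⇑fg.1) (⇑fg.2) < 1 / 5)).card : ℝ)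
      / (Fintype.card (Equiv.Perm (Fin n) × Equiv.Perm (Fin n)) : ℝ) < 1 / 12 := by
  classical
  have hnpos : 0 < n := by omega
  set Bad := Finset.univ.filter (fun fg : Equiv.Perm (Fin n) × Equiv.Perm (Fin n) =>
        distToInv n (⇑fg.1) (⇑fg.2) < 1 / 5) with hBad
  set A1 := Finset.univ.filter (fun fg : Equiv.Perm (Fin n) × Equiv.Perm (Fin n) =>
        37 ≤ fixc (fg.2⁻¹ * fg.1)) with hA1
  set A2 := Finset.univ.filter (fun fg : Equiv.Perm (Fin n) × Equiv.Perm (Fin n) =>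
        37 ≤ fixc (fg.2 * fg.1)) with hA2
  set D := Finset.univ.filter (fun σ : Equiv.Perm (Fin n) => 37 ≤ fixc σ) with hD
  -- Step 1 : Bad ⊆ A1 ∪ A2
  have hsub : Bad ⊆ A1 ∪ A2 := by
    intro fg hfg
    obtain ⟨f, g⟩ := fg
    simp only [hBad, Finset.mem_filter, Finset.mem_univ, true_and] at hfg
    -- the infimum set is nonempty
    have hne : {r : ℝ | ∃ p ∈ InvPairs n, r = (nhdist ⇑f p.1 + nhdist ⇑g p.2) / 2}.Nonempty := by
      refine ⟨(nhdist ⇑f (fun i => i) + nhdist ⇑g (fun i => i)) / 2,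
        ⟨(fun i => i, fun i => i), Or.inl fun i => rfl, rfl⟩⟩
    obtain ⟨r, ⟨p, hp, rfl⟩, hr⟩ := exists_lt_of_csInf_lt hne hfg
    -- convert the distance bound to naturals
    have hH : 5 * (hammingDist ⇑f p.1 + hammingDist ⇑g p.2) < 2 * n := by
      have hnR : (0 : ℝ) < n := by exact_mod_cast hnpos
      have : ((hammingDist ⇑f p.1 : ℝ) + (hammingDist ⇑g p.2 : ℝ)) / n < 2 / 5 := by
        unfold nhdist at hr
        rw [← add_div] at hr
        linarith
      have h5 : (5 : ℝ) * ((hammingDist ⇑f p.1 : ℝ) + (hammingDist ⇑g p.2 : ℝ)) < 2 * n := by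
        rw [div_lt_div_iff₀ hnR (by norm_num)] at this
        linarith
      exact_mod_cast h5
    rcases hp with hpe | hpi
    · -- equal case : f and g agree on many points
      rw [Finset.mem_union]
      left
      simp only [hA1, Finset.mem_filter, Finset.mem_univ, true_and]
      have hp12 : p.1 = p.2 := funext hpe
      have htri : hammingDist ⇑f ⇑g ≤ hammingDist ⇑f p.1 + hammingDist ⇑g p.2 := by
        calc hammingDist ⇑f ⇑g ≤ hammingDist ⇑f p.1 + hammingDist p.1 ⇑g :=
              hammingDist_triangle _ _ _
          _ = hammingDist ⇑f p.1 + hammingDist ⇑g p.2 := by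
              rw [hammingDist_comm p.1, hp12]
      have hfilter : (Finset.univ.filter fun i => (g⁻¹ * f) i ≠ i)
          = Finset.univ.filter fun i => f i ≠ g i := by
        apply Finset.filter_congr
        intro i _
        simp only [Equiv.Perm.mul_apply, ne_eq]
        constructor
        · intro h h'; exact h (by rw [h']; exact g.symm_apply_apply i)
        · intro h h'; exact h (by
            have := congrArg g h'
            simpa using this)
      have hfe : fixc (g⁻¹ * f) = n - hammingDist ⇑f ⇑g := by
        rw [fixc_eq_sub, hfilter]; rfl
      have : hammingDist ⇑f ⇑g ≤ n := by
        unfold hammingDist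
        exact le_trans (Finset.card_filter_le _ _) (by simp)
      omega
    · -- co-inverse case : g ∘ f has many fixed points
      rw [Finset.mem_union]
      right
      simp only [hA2, Finset.mem_filter, Finset.mem_univ, true_and]
      -- bad set for g∘f
      have hsub2 : (Finset.univ.filter fun i => g (f i) ≠ i)
          ⊆ (Finset.univ.filter fun i => f i ≠ p.1 i)
            ∪ (Finset.univ.filter fun i => g (f i) ≠ p.2 (f i)) := by
        intro i hi
        simp only [Finset.mem_filter, Finset.mem_univ, true_and, Finset.mem_union, ne_eq] at *
        by_contra hcon
        push_neg at hcon
        exact hi (by rw [hcon.2, hcon.1, hpi i])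
      have hc2 : (Finset.univ.filter fun i => g (f i) ≠ p.2 (f i)).card
          ≤ hammingDist ⇑g p.2 := by
        unfold hammingDist
        apply Finset.card_le_card_of_injOn (fun i => f i)
        · intro i hi
          simp only [Finset.mem_filter, Finset.mem_univ, true_and] at *
          simpa using hi
        · intro a _ b _ hab
          exact f.injective hab
      have hcard : (Finset.univ.filter fun i => g (f i) ≠ i).card
          ≤ hammingDist ⇑f p.1 + hammingDist ⇑g p.2 := by
        calc (Finset.univ.filter fun i => g (f i) ≠ i).card
            ≤ ((Finset.univ.filter fun i => f i ≠ p.1 i)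
              ∪ (Finset.univ.filter fun i => g (f i) ≠ p.2 (f i))).card :=
              Finset.card_le_card hsub2
          _ ≤ (Finset.univ.filter fun i => f i ≠ p.1 i).card
              + (Finset.univ.filter fun i => g (f i) ≠ p.2 (f i)).card :=
              Finset.card_union_le _ _
          _ ≤ hammingDist ⇑f p.1 + hammingDist ⇑g p.2 := by
              refine Nat.add_le_add (le_of_eq rfl) hc2
      have hfe : fixc (g * f) = n - (Finset.univ.filter fun i => g (f i) ≠ i).card := by
        rw [fixc_eq_sub]; rfl
      omega
  -- Step 2 : cardinality of A1 and A2
  have hcard1 : A1.card = D.card * n ! := by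
    have : A1.card = (D ×ˢ (Finset.univ : Finset (Equiv.Perm (Fin n)))).card := by
      refine Finset.card_nbij' (fun fg => (fg.2⁻¹ * fg.1, fg.2))
        (fun q => (q.2 * q.1, q.2)) ?_ ?_ ?_ ?_
      · intro a ha
        simp only [hA1, Finset.mem_coe, Finset.mem_filter, Finset.mem_univ, true_and] at ha
        simp [Finset.mem_product, hD, ha]
      · intro a ha
        simp only [Finset.mem_coe, Finset.mem_product, hD, Finset.mem_filter, Finset.mem_univ, true_and] at ha
        simp [hA1, mul_assoc, ha.1]
      · intro a _; simp [mul_assoc]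
      · intro a _; simp [← mul_assoc]
    rw [this, Finset.card_product, Finset.card_univ, Fintype.card_perm, Fintype.card_fin]
  have hcard2 : A2.card = D.card * n ! := by
    have : A2.card = (D ×ˢ (Finset.univ : Finset (Equiv.Perm (Fin n)))).card := by
      refine Finset.card_nbij' (fun fg => (fg.2 * fg.1, fg.2))
        (fun q => (q.2⁻¹ * q.1, q.2)) ?_ ?_ ?_ ?_
      · intro a ha
        simp only [hA2, Finset.mem_coe, Finset.mem_filter, Finset.mem_univ, true_and] at ha
        simp [Finset.mem_product, hD, ha]
      · intro a ha
        simp only [Finset.mem_coe, Finset.mem_product, hD, Finset.mem_filter, Finset.mem_univ, true_and] at ha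
        simp [hA2, ← mul_assoc, ha.1]
      · intro a _; simp [← mul_assoc]
      · intro a _; simp [mul_assoc]
    rw [this, Finset.card_product, Finset.card_univ, Fintype.card_perm, Fintype.card_fin]
  have hN : Bad.card ≤ 2 * (D.card * n !) := by
    calc Bad.card ≤ (A1 ∪ A2).card := Finset.card_le_card hsub
      _ ≤ A1.card + A2.card := Finset.card_union_le _ _
      _ = 2 * (D.card * n !) := by rw [hcard1, hcard2]; ring
  have hDle : 37 * D.card ≤ n ! := markov_fixc hnpos
  have hT : Fintype.card (Equiv.Perm (Fin n) × Equiv.Perm (Fin n)) = n ! * n ! := by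
    rw [Fintype.card_prod, Fintype.card_perm, Fintype.card_fin]
  have hfacpos : 0 < n ! := Nat.factorial_pos n
  -- final arithmetic
  have hkey : 12 * Bad.card < n ! * n ! := by
    nlinarith [hN, hDle, hfacpos]
  rw [hT]
  rw [div_lt_div_iff₀ (by positivity) (by norm_num)]
  have : (Bad.card : ℝ) * 12 < (n ! * n ! : ℕ) := by exact_mod_cast by omega
  push_cast at this ⊢
  linarith
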